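/- The rewrite system σ on the terms of L' is strongly normalizing: there is no infinite sequence of σ-rewriting steps. -/

import Mathlib

/- ## Binding logic: syntax and sequent calculus -/

/-- A binding-logic language: function and predicate symbols with binding arities. -/
structure BSig where
  Fn : Type
  Pr : Type
  /-- binding arity of a function symbol -/
  far : Fn → List ℕ
  /-- binding arity of a predicate symbol -/
  par : Pr → List ℕ

/-- Terms of binding logic (α-equivalence classes, in locally nameless / de Bruijn style):
`bvar i` is a variable bound by a binder of a function symbol or by a quantifier,
`fvar x` is a named free variable.  In `app f a`, the `i`-th argument `a i` is a term
in which `(S.far f).get i` additional variables (de Bruijn indices `0, …, kᵢ - 1`) are bound. -/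
inductive Tm (S : BSig) : Type
  | bvar : ℕ → Tm S
  | fvar : ℕ → Tm S
  | app : (f : S.Fn) → (Fin (S.far f).length → Tm S) → Tm S

variable {S : BSig}

/-- `Tm.WF p t`: all de Bruijn variables of `t` are bound among the `p` ambient binders;
a *term of the language* (over named free variables) at binder depth `p`. -/
def Tm.WF : ℕ → Tm S → Prop
  | p, .bvar i => i < p
  | _, .fvar _ => True
  | p, .app f a => ∀ i, Tm.WF (p + (S.far f).get i) (a i)

/-- Capture-avoiding substitution of the term `u` for the free variable `x`. -/
def Tm.subst (x : ℕ) (u : Tm S) : Tm S → Tm S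
  | .bvar i => .bvar i
  | .fvar y => if y = x then u else .fvar y
  | .app f a => .app f (fun i => Tm.subst x u (a i))

/-- Instantiation of the bound variable `k` by the (locally closed) term `u`. -/
def Tm.openT (u : Tm S) : ℕ → Tm S → Tm S
  | k, .bvar i => if i = k then u else .bvar i
  | _, .fvar y => .fvar y
  | k, .app f a => .app f (fun i => Tm.openT u (k + (S.far f).get i) (a i))

/-- Free (named) variables of a term. -/
def Tm.fv : Tm S → Set ℕ
  | .bvar _ => ∅
  | .fvar x => {x}
  | .app _ a => ⋃ i, (a i).fv

/-- Propositions of binding logic.  In `atom P a`, the `i`-th argument binds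
`(S.par P).get i` variables; quantifiers bind one de Bruijn variable. -/
inductive Fm (S : BSig) : Type
  | atom : (P : S.Pr) → (Fin (S.par P).length → Tm S) → Fm S
  | imp : Fm S → Fm S → Fm S
  | conj : Fm S → Fm S → Fm S
  | disj : Fm S → Fm S → Fm S
  | bot : Fm S
  | all : Fm S → Fm S
  | ex : Fm S → Fm S

/-- `Fm.WF q A`: well-formedness of `A` under `q` ambient quantifiers. -/
def Fm.WF : ℕ → Fm S → Prop
  | q, .atom P a => ∀ i, Tm.WF (q + (S.par P).get i) (a i)
  | q, .imp A B => Fm.WF q A ∧ Fm.WF q B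
  | q, .conj A B => Fm.WF q A ∧ Fm.WF q B
  | q, .disj A B => Fm.WF q A ∧ Fm.WF q B
  | _, .bot => True
  | q, .all A => Fm.WF (q + 1) A
  | q, .ex A => Fm.WF (q + 1) A

/-- Free (named) variables of a proposition. -/
def Fm.fv : Fm S → Set ℕ
  | .atom _ a => ⋃ i, (a i).fv
  | .imp A B => A.fv ∪ B.fv
  | .conj A B => A.fv ∪ B.fv
  | .disj A B => A.fv ∪ B.fv
  | .bot => ∅
  | .all A => A.fv
  | .ex A => A.fv

/-- Instantiation of the quantifier-bound variable `k` of a proposition by a term. -/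
def Fm.openF (u : Tm S) : ℕ → Fm S → Fm S
  | k, .atom P a => .atom P (fun i => Tm.openT u (k + (S.par P).get i) (a i))
  | k, .imp A B => .imp (Fm.openF u k A) (Fm.openF u k B)
  | k, .conj A B => .conj (Fm.openF u k A) (Fm.openF u k B)
  | k, .disj A B => .disj (Fm.openF u k A) (Fm.openF u k B)
  | _, .bot => .bot
  | k, .all A => .all (Fm.openF u (k + 1) A)
  | k, .ex A => .ex (Fm.openF u (k + 1) A)

/-- Capture-avoiding substitution of a term for a free variable in a proposition. -/
def Fm.subst (x : ℕ) (u : Tm S) : Fm S → Fm S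
  | .atom P a => .atom P (fun i => Tm.subst x u (a i))
  | .imp A B => .imp (Fm.subst x u A) (Fm.subst x u B)
  | .conj A B => .conj (Fm.subst x u A) (Fm.subst x u B)
  | .disj A B => .disj (Fm.subst x u A) (Fm.subst x u B)
  | .bot => .bot
  | .all A => .all (Fm.subst x u A)
  | .ex A => .ex (Fm.subst x u A)

/-- Free variables of a multiset of propositions. -/
def mFv (Γ : Multiset (Fm S)) : Set ℕ := {x | ∃ A ∈ Γ, x ∈ A.fv}

/-- The sequent calculus of binding logic: exactly the standard rules of classical
sequent calculus, with capture-avoiding substitution in the quantifier rules. -/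
inductive Deriv (S : BSig) : Multiset (Fm S) → Multiset (Fm S) → Prop
  | ax (A : Fm S) : Deriv S {A} {A}
  | cut {Γ Δ : Multiset (Fm S)} {A : Fm S} :
      Deriv S (A ::ₘ Γ) Δ → Deriv S Γ (A ::ₘ Δ) → Deriv S Γ Δ
  | contrL {Γ Δ} {A : Fm S} : Deriv S (A ::ₘ A ::ₘ Γ) Δ → Deriv S (A ::ₘ Γ) Δ
  | contrR {Γ Δ} {A : Fm S} : Deriv S Γ (A ::ₘ A ::ₘ Δ) → Deriv S Γ (A ::ₘ Δ)
  | weakL {Γ Δ} {A : Fm S} : Deriv S Γ Δ → Deriv S (A ::ₘ Γ) Δ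
  | weakR {Γ Δ} {A : Fm S} : Deriv S Γ Δ → Deriv S Γ (A ::ₘ Δ)
  | impL {Γ Δ} {A B : Fm S} :
      Deriv S Γ (A ::ₘ Δ) → Deriv S (B ::ₘ Γ) Δ → Deriv S ((Fm.imp A B) ::ₘ Γ) Δ
  | impR {Γ Δ} {A B : Fm S} :
      Deriv S (A ::ₘ Γ) (B ::ₘ Δ) → Deriv S Γ ((Fm.imp A B) ::ₘ Δ)
  | conjL {Γ Δ} {A B : Fm S} :
      Deriv S (A ::ₘ B ::ₘ Γ) Δ → Deriv S ((Fm.conj A B) ::ₘ Γ) Δ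
  | conjR {Γ Δ} {A B : Fm S} :
      Deriv S Γ (A ::ₘ Δ) → Deriv S Γ (B ::ₘ Δ) → Deriv S Γ ((Fm.conj A B) ::ₘ Δ)
  | disjL {Γ Δ} {A B : Fm S} :
      Deriv S (A ::ₘ Γ) Δ → Deriv S (B ::ₘ Γ) Δ → Deriv S ((Fm.disj A B) ::ₘ Γ) Δ
  | disjR {Γ Δ} {A B : Fm S} :
      Deriv S Γ (A ::ₘ B ::ₘ Δ) → Deriv S Γ ((Fm.disj A B) ::ₘ Δ)
  | botL {Γ Δ} : Deriv S ((Fm.bot) ::ₘ Γ) Δ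
  | allL {Γ Δ} {A : Fm S} {t : Tm S} : Tm.WF 0 t →
      Deriv S ((Fm.openF t 0 A) ::ₘ Γ) Δ → Deriv S ((Fm.all A) ::ₘ Γ) Δ
  | allR {Γ Δ} {A : Fm S} {x : ℕ} :
      x ∉ mFv Γ → x ∉ mFv Δ → x ∉ A.fv →
      Deriv S Γ ((Fm.openF (Tm.fvar x) 0 A) ::ₘ Δ) → Deriv S Γ ((Fm.all A) ::ₘ Δ)
  | exL {Γ Δ} {A : Fm S} {x : ℕ} :
      x ∉ mFv Γ → x ∉ mFv Δ → x ∉ A.fv →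
      Deriv S ((Fm.openF (Tm.fvar x) 0 A) ::ₘ Γ) Δ → Deriv S ((Fm.ex A) ::ₘ Γ) Δ
  | exR {Γ Δ} {A : Fm S} {t : Tm S} : Tm.WF 0 t →
      Deriv S Γ ((Fm.openF t 0 A) ::ₘ Δ) → Deriv S Γ ((Fm.ex A) ::ₘ Δ)
/- ## The translated language L' : explicit substitutions and de Bruijn indices -/

/-- Sorts of `L'`: `tm n` for terms in a context of `n` bound variables, and
`sb n p` for explicit substitutions mapping `p` variables to terms of sort `n`. -/
inductive Srt : Type
  | tm : ℕ → Srt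
  | sb : ℕ → ℕ → Srt
deriving DecidableEq

/-- Terms of `L'`.  `evar x s` is a named variable of sort `s`; `qvar i` is a
(formula-level) de Bruijn variable bound by a quantifier; `idx i n` is the de Bruijn
constant `iₙ` (`1 ≤ i ≤ n`); `fa f p a` is `fₚ(a)`; `sub t s` is `t[s]`;
`eid n`, `cons`, `up n`, `comp` are `idₙ`, cons `.`, `↑ₙ` and composition `∘`. -/
inductive ETm (S : BSig) : Type
  | evar : ℕ → Srt → ETm S
  | qvar : ℕ → ETm S
  | idx : ℕ → ℕ → ETm S
  | fa : (f : S.Fn) → ℕ → (Fin (S.far f).length → ETm S) → ETm S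
  | sub : ETm S → ETm S → ETm S
  | eid : ℕ → ETm S
  | cons : ETm S → ETm S → ETm S
  | up : ℕ → ETm S
  | comp : ETm S → ETm S → ETm S

variable {S : BSig}

/-- The iterated shift `↑^k` out of context `p`:
`↑_p ∘ (↑_{p+1} ∘ ⋯ ∘ ↑_{p+k-1})`, of sort `⟨p+k, p⟩` (`id_p` for `k = 0`). -/
def upChain (S : BSig) (p : ℕ) : ℕ → ETm S
  | 0 => .eid p
  | 1 => .up p
  | k + 2 => .comp (.up p) (upChain S (p + 1) (k + 1))

/-- Sorting judgment for `L'`; `Θ` gives the sorts of the quantifier-bound variables. -/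
inductive HasSort : List Srt → ETm S → Srt → Prop
  | evar {Θ x s} : HasSort Θ (.evar x s) s
  | qvar {Θ i s} : Θ[i]? = some s → HasSort Θ (.qvar i) s
  | idx {Θ i n} : 1 ≤ i → i ≤ n → HasSort Θ (.idx i n) (.tm n)
  | fa {Θ} {f : S.Fn} {p : ℕ} {a : Fin (S.far f).length → ETm S} :
      (∀ j, HasSort Θ (a j) (.tm (p + (S.far f).get j))) →
      HasSort Θ (.fa f p a) (.tm p)
  | sub {Θ t s n p} : HasSort Θ t (.tm p) → HasSort Θ s (.sb n p) →
      HasSort Θ (.sub t s) (.tm n)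
  | eid {Θ n} : HasSort Θ (.eid n) (.sb n n)
  | cons {Θ t s n p} : HasSort Θ t (.tm n) → HasSort Θ s (.sb n p) →
      HasSort Θ (.cons t s) (.sb n (p + 1))
  | up {Θ n} : HasSort Θ (.up n) (.sb (n + 1) n)
  | comp {Θ s₁ s₂ n p q} : HasSort Θ s₁ (.sb p n) → HasSort Θ s₂ (.sb q p) →
      HasSort Θ (.comp s₁ s₂) (.sb q n)

/-- The component `1[↑^j]` (of sort `q+k`, with `1` of sort `q+k-j`). -/
def shiftOne (S : BSig) (q k j : ℕ) : ETm S :=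
  if j = 0 then .idx 1 (q + k) else .sub (.idx 1 (q + k - j)) (upChain S (q + k - j) j)

/-- Auxiliary: builds `1[↑^j]. … .1[↑^{k-1}].(s ∘ ↑^k)`. -/
def liftAux (S : BSig) (q k : ℕ) (s : ETm S) : ℕ → ℕ → ETm S
  | 0, _ => .comp s (upChain S q k)
  | m + 1, j => .cons (shiftOne S q k j) (liftAux S q k s m (j + 1))

/-- The substitution `1.1[↑].….1[↑^{k−1}].(s ∘ ↑^k)` of sort `⟨q+k, p+k⟩`,
for `s` of sort `⟨q,p⟩` (just `s` when `k = 0`). -/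
def liftSub (S : BSig) (q k : ℕ) (s : ETm S) : ETm S :=
  match k with
  | 0 => s
  | k' + 1 => liftAux S q (k' + 1) s (k' + 1) 0

/-- One step of `σ`-rewriting (at the root or in any subterm). -/
inductive Rw : ETm S → ETm S → Prop
  -- the rule n+1 → 1[↑ⁿ]
  | ridx {i n : ℕ} : 1 ≤ i → i + 1 ≤ n →
      Rw (.idx (i + 1) n) (.sub (.idx 1 (n - i)) (upChain S (n - i) i))
  -- 1[t.s] → t
  | rhead {m : ℕ} {t s : ETm S} : Rw (.sub (.idx 1 m) (.cons t s)) t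
  -- t[id] → t
  | rtid {n : ℕ} {t : ETm S} : Rw (.sub t (.eid n)) t
  -- (t[s])[s'] → t[s ∘ s']
  | rclos {t s s' : ETm S} : Rw (.sub (.sub t s) s') (.sub t (.comp s s'))
  -- id ∘ s → s
  | ridl {n : ℕ} {s : ETm S} : Rw (.comp (.eid n) s) s
  -- ↑ ∘ (t.s) → s
  | rshcons {n : ℕ} {t s : ETm S} : Rw (.comp (.up n) (.cons t s)) s
  -- (s₁ ∘ s₂) ∘ s₃ → s₁ ∘ (s₂ ∘ s₃)
  | rassoc {s₁ s₂ s₃ : ETm S} : Rw (.comp (.comp s₁ s₂) s₃) (.comp s₁ (.comp s₂ s₃))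
  -- (t.s) ∘ s' → t[s'].(s ∘ s')
  | rmap {t s s' : ETm S} : Rw (.comp (.cons t s) s') (.cons (.sub t s') (.comp s s'))
  -- s ∘ id → s
  | ridr {n : ℕ} {s : ETm S} : Rw (.comp s (.eid n)) s
  -- 1.↑ → id
  | rvarsh {n : ℕ} : Rw (.cons (.idx 1 (n + 1)) (.up n)) (.eid (n + 1))
  -- 1[s].(↑ ∘ s) → s
  | rscons {m n : ℕ} {s : ETm S} : Rw (.cons (.sub (.idx 1 m) s) (.comp (.up n) s)) s
  -- fₚ(t₁,…,tₙ)[s] → f_q(t₁[1.1[↑].….1[↑^{k₁−1}].s∘↑^{k₁}], …) for s of sort ⟨q,p⟩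
  | rfa {f : S.Fn} {p q : ℕ} {a : Fin (S.far f).length → ETm S} {s : ETm S} :
      (∃ Θ, HasSort Θ s (.sb q p)) →
      Rw (.sub (.fa f p a) s)
         (.fa f q (fun i => .sub (a i) (liftSub S q ((S.far f).get i) s)))
  -- congruence: rewriting in subterms
  | cfa {f : S.Fn} {p : ℕ} {a : Fin (S.far f).length → ETm S}
      {i : Fin (S.far f).length} {t' : ETm S} :
      Rw (a i) t' → Rw (.fa f p a) (.fa f p (Function.update a i t'))
  | csub₁ {t t' s : ETm S} : Rw t t' → Rw (.sub t s) (.sub t' s)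
  | csub₂ {t s s' : ETm S} : Rw s s' → Rw (.sub t s) (.sub t s')
  | ccons₁ {t t' s : ETm S} : Rw t t' → Rw (.cons t s) (.cons t' s)
  | ccons₂ {t s s' : ETm S} : Rw s s' → Rw (.cons t s) (.cons t s')
  | ccomp₁ {t t' s : ETm S} : Rw t t' → Rw (.comp t s) (.comp t' s)
  | ccomp₂ {t s s' : ETm S} : Rw s s' → Rw (.comp t s) (.comp t s')

/-- The congruence `≡` on terms of `L'` generated by the rewrite system `σ`. -/
def TmConv (S : BSig) : ETm S → ETm S → Prop := Relation.EqvGen Rw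

/-- A term is `σ`-normal if no rewrite step applies to it. -/
def ENormal (t : ETm S) : Prop := ∀ u, ¬ Rw t u

/-- Propositions of `L'` (quantifiers bind one variable of the indicated sort,
represented by formula-level de Bruijn indices `qvar`). -/
inductive EFm (S : BSig) : Type
  | atom : (P : S.Pr) → (Fin (S.par P).length → ETm S) → EFm S
  | imp : EFm S → EFm S → EFm S
  | conj : EFm S → EFm S → EFm S
  | disj : EFm S → EFm S → EFm S
  | bot : EFm S
  | all : Srt → EFm S → EFm S
  | ex : Srt → EFm S → EFm S

/-- Replacement of the quantifier-bound variable `k` by a term (in a term of `L'`). -/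
def ETm.openE (u : ETm S) (k : ℕ) : ETm S → ETm S
  | .qvar i => if i = k then u else .qvar i
  | .evar x s => .evar x s
  | .idx i n => .idx i n
  | .fa f p a => .fa f p (fun j => ETm.openE u k (a j))
  | .sub t s => .sub (ETm.openE u k t) (ETm.openE u k s)
  | .eid n => .eid n
  | .cons t s => .cons (ETm.openE u k t) (ETm.openE u k s)
  | .up n => .up n
  | .comp t s => .comp (ETm.openE u k t) (ETm.openE u k s)

/-- Instantiation of the quantifier-bound variable `k` of a proposition of `L'`. -/
def EFm.openF (u : ETm S) : ℕ → EFm S → EFm S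
  | k, .atom P a => .atom P (fun i => ETm.openE u k (a i))
  | k, .imp A B => .imp (EFm.openF u k A) (EFm.openF u k B)
  | k, .conj A B => .conj (EFm.openF u k A) (EFm.openF u k B)
  | k, .disj A B => .disj (EFm.openF u k A) (EFm.openF u k B)
  | _, .bot => .bot
  | k, .all s A => .all s (EFm.openF u (k + 1) A)
  | k, .ex s A => .ex s (EFm.openF u (k + 1) A)

/-- Names of the free named variables of a term of `L'`. -/
def ETm.fvs : ETm S → Set ℕ
  | .evar x _ => {x}
  | .qvar _ => ∅
  | .idx _ _ => ∅
  | .fa _ _ a => ⋃ i, (a i).fvs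
  | .sub t s => t.fvs ∪ s.fvs
  | .eid _ => ∅
  | .cons t s => t.fvs ∪ s.fvs
  | .up _ => ∅
  | .comp t s => t.fvs ∪ s.fvs

/-- Names of the free named variables of a proposition of `L'`. -/
def EFm.fvs : EFm S → Set ℕ
  | .atom _ a => ⋃ i, (a i).fvs
  | .imp A B => A.fvs ∪ B.fvs
  | .conj A B => A.fvs ∪ B.fvs
  | .disj A B => A.fvs ∪ B.fvs
  | .bot => ∅
  | .all _ A => A.fvs
  | .ex _ A => A.fvs

/-- Free variables of a multiset of `L'`-propositions. -/
def mFvE (Γ : Multiset (EFm S)) : Set ℕ := {x | ∃ A ∈ Γ, x ∈ A.fvs}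

/-- The congruence on propositions of `L'` generated by `σ`
(congruent atoms have `≡`-congruent arguments). -/
inductive FConv : EFm S → EFm S → Prop
  | atom {P : S.Pr} {a b : Fin (S.par P).length → ETm S} :
      (∀ i, TmConv S (a i) (b i)) → FConv (.atom P a) (.atom P b)
  | imp {A A' B B'} : FConv A A' → FConv B B' → FConv (.imp A B) (.imp A' B')
  | conj {A A' B B'} : FConv A A' → FConv B B' → FConv (.conj A B) (.conj A' B')
  | disj {A A' B B'} : FConv A A' → FConv B B' → FConv (.disj A B) (.disj A' B')
  | bot : FConv .bot .bot
  | all {s A A'} : FConv A A' → FConv (.all s A) (.all s A')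
  | ex {s A A'} : FConv A A' → FConv (.ex s A) (.ex s A')

/-- Sequent calculus modulo a congruence `E`, with proof length recorded:
the standard classical rules, where principal formulas need only be congruent
to the displayed shape.  `DerivM E n Γ Δ` : `Γ ⊢ Δ` has a proof of length `n`. -/
inductive DerivM (E : EFm S → EFm S → Prop) : ℕ → Multiset (EFm S) → Multiset (EFm S) → Prop
  | ax {A B : EFm S} : E A B → DerivM E 1 {A} {B}
  | cut {m n Γ Δ} {A B : EFm S} : E A B →
      DerivM E m (A ::ₘ Γ) Δ → DerivM E n Γ (B ::ₘ Δ) → DerivM E (m + n + 1) Γ Δ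
  | contrL {m Γ Δ} {A B₁ B₂ : EFm S} : E A B₁ → E A B₂ →
      DerivM E m (B₁ ::ₘ B₂ ::ₘ Γ) Δ → DerivM E (m + 1) (A ::ₘ Γ) Δ
  | contrR {m Γ Δ} {A B₁ B₂ : EFm S} : E A B₁ → E A B₂ →
      DerivM E m Γ (B₁ ::ₘ B₂ ::ₘ Δ) → DerivM E (m + 1) Γ (A ::ₘ Δ)
  | weakL {m Γ Δ} {A : EFm S} : DerivM E m Γ Δ → DerivM E (m + 1) (A ::ₘ Γ) Δ
  | weakR {m Γ Δ} {A : EFm S} : DerivM E m Γ Δ → DerivM E (m + 1) Γ (A ::ₘ Δ)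
  | impL {m n Γ Δ} {C A B : EFm S} : E C (.imp A B) →
      DerivM E m Γ (A ::ₘ Δ) → DerivM E n (B ::ₘ Γ) Δ → DerivM E (m + n + 1) (C ::ₘ Γ) Δ
  | impR {m Γ Δ} {C A B : EFm S} : E C (.imp A B) →
      DerivM E m (A ::ₘ Γ) (B ::ₘ Δ) → DerivM E (m + 1) Γ (C ::ₘ Δ)
  | conjL {m Γ Δ} {C A B : EFm S} : E C (.conj A B) →
      DerivM E m (A ::ₘ B ::ₘ Γ) Δ → DerivM E (m + 1) (C ::ₘ Γ) Δ
  | conjR {m n Γ Δ} {C A B : EFm S} : E C (.conj A B) →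
      DerivM E m Γ (A ::ₘ Δ) → DerivM E n Γ (B ::ₘ Δ) → DerivM E (m + n + 1) Γ (C ::ₘ Δ)
  | disjL {m n Γ Δ} {C A B : EFm S} : E C (.disj A B) →
      DerivM E m (A ::ₘ Γ) Δ → DerivM E n (B ::ₘ Γ) Δ → DerivM E (m + n + 1) (C ::ₘ Γ) Δ
  | disjR {m Γ Δ} {C A B : EFm S} : E C (.disj A B) →
      DerivM E m Γ (A ::ₘ B ::ₘ Δ) → DerivM E (m + 1) Γ (C ::ₘ Δ)
  | botL {Γ Δ} {A : EFm S} : E A .bot → DerivM E 1 (A ::ₘ Γ) Δ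
  | allL {m Γ Δ} {B C A : EFm S} {s : Srt} {t : ETm S} :
      E B (.all s A) → E C (EFm.openF t 0 A) → HasSort [] t s →
      DerivM E m (C ::ₘ Γ) Δ → DerivM E (m + 1) (B ::ₘ Γ) Δ
  | allR {m Γ Δ} {B A : EFm S} {s : Srt} {x : ℕ} :
      E B (.all s A) → x ∉ mFvE Γ → x ∉ mFvE Δ → x ∉ A.fvs →
      DerivM E m Γ ((EFm.openF (.evar x s) 0 A) ::ₘ Δ) → DerivM E (m + 1) Γ (B ::ₘ Δ)
  | exL {m Γ Δ} {B A : EFm S} {s : Srt} {x : ℕ} :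
      E B (.ex s A) → x ∉ mFvE Γ → x ∉ mFvE Δ → x ∉ A.fvs →
      DerivM E m ((EFm.openF (.evar x s) 0 A) ::ₘ Γ) Δ → DerivM E (m + 1) (B ::ₘ Γ) Δ
  | exR {m Γ Δ} {B C A : EFm S} {s : Srt} {t : ETm S} :
      E B (.ex s A) → E C (EFm.openF t 0 A) → HasSort [] t s →
      DerivM E m Γ (C ::ₘ Δ) → DerivM E (m + 1) Γ (B ::ₘ Δ)

/-- Provability in sequent calculus modulo the congruence `E`. -/
def DerivMod (E : EFm S → EFm S → Prop) (Γ Δ : Multiset (EFm S)) : Prop :=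
  ∃ n, DerivM E n Γ Δ

/- ## Pre-cooking : the translation from L to L' -/

/-- Pre-cooking of a term at binder depth `p` (the length of the list `l` of
bound variables): binder-bound variables become de Bruijn constants, other
variables are protected by the shift `↑^p`. -/
def Ft (S : BSig) : (p : ℕ) → Tm S → ETm S
  | p, .bvar i =>
      if i < p then .idx (i + 1) p
      else if p = 0 then .qvar (i - p) else .sub (.qvar (i - p)) (upChain S 0 p)
  | p, .fvar x =>
      if p = 0 then .evar x (.tm 0) else .sub (.evar x (.tm 0)) (upChain S 0 p)
  | p, .app f a => .fa f p (fun i => Ft S (p + (S.far f).get i) (a i))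

/-- Pre-cooking of a proposition: `A' = F(A, ε)`. -/
def Ff (S : BSig) : Fm S → EFm S
  | .atom P a => .atom P (fun i => Ft S ((S.par P).get i) (a i))
  | .imp A B => .imp (Ff S A) (Ff S B)
  | .conj A B => .conj (Ff S A) (Ff S B)
  | .disj A B => .disj (Ff S A) (Ff S B)
  | .bot => .bot
  | .all A => .all (.tm 0) (Ff S A)
  | .ex A => .ex (.tm 0) (Ff S A)

/-- Grafting `⟨v/x⟩t` in `L'`: textual replacement of the (sort-0) variable `x` by `v`. -/
def ETm.graft (x : ℕ) (v : ETm S) : ETm S → ETm S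
  | .evar y s => if y = x ∧ s = .tm 0 then v else .evar y s
  | .qvar i => .qvar i
  | .idx i n => .idx i n
  | .fa f p a => .fa f p (fun j => ETm.graft x v (a j))
  | .sub t s => .sub (ETm.graft x v t) (ETm.graft x v s)
  | .eid n => .eid n
  | .cons t s => .cons (ETm.graft x v t) (ETm.graft x v s)
  | .up n => .up n
  | .comp t s => .comp (ETm.graft x v t) (ETm.graft x v s)

/-- Substitution `(v/x)A` of a (quantifier-closed) term for a variable in a
proposition of `L'` (capture-avoiding, since terms of `L'` have no binders). -/
def EFm.graft (x : ℕ) (v : ETm S) : EFm S → EFm S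
  | .atom P a => .atom P (fun i => ETm.graft x v (a i))
  | .imp A B => .imp (EFm.graft x v A) (EFm.graft x v B)
  | .conj A B => .conj (EFm.graft x v A) (EFm.graft x v B)
  | .disj A B => .disj (EFm.graft x v A) (EFm.graft x v B)
  | .bot => .bot
  | .all s A => .all s (EFm.graft x v A)
  | .ex s A => .ex s (EFm.graft x v A)

/- ## F-terms and F-propositions -/

/-- All named variables occurring in the term have sort `0`. -/
def ETm.vars0 : ETm S → Prop
  | .evar _ s => s = .tm 0
  | .qvar _ => True
  | .idx _ _ => True
  | .fa _ _ a => ∀ i, (a i).vars0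
  | .sub t s => t.vars0 ∧ s.vars0
  | .eid _ => True
  | .cons t s => t.vars0 ∧ s.vars0
  | .up _ => True
  | .comp t s => t.vars0 ∧ s.vars0

/-- All named variables of the proposition have sort `0`, and all its
quantifiers bind variables of sort `0`. -/
def EFm.vars0F : EFm S → Prop
  | .atom _ a => ∀ i, (a i).vars0
  | .imp A B => A.vars0F ∧ B.vars0F
  | .conj A B => A.vars0F ∧ B.vars0F
  | .disj A B => A.vars0F ∧ B.vars0F
  | .bot => True
  | .all s A => s = .tm 0 ∧ A.vars0F
  | .ex s A => s = .tm 0 ∧ A.vars0F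

/-- The proposition is `σ`-normal: every term occurring in it is `σ`-normal. -/
def EFm.TmsNormal : EFm S → Prop
  | .atom _ a => ∀ i, ENormal (a i)
  | .imp A B => A.TmsNormal ∧ B.TmsNormal
  | .conj A B => A.TmsNormal ∧ B.TmsNormal
  | .disj A B => A.TmsNormal ∧ B.TmsNormal
  | .bot => True
  | .all _ A => A.TmsNormal
  | .ex _ A => A.TmsNormal

/-- Well-sortedness of a proposition of `L'` in a context `Θ` of quantified sorts. -/
def EFmSorted : List Srt → EFm S → Prop
  | Θ, .atom P a => ∀ i, HasSort Θ (a i) (.tm ((S.par P).get i))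
  | Θ, .imp A B => EFmSorted Θ A ∧ EFmSorted Θ B
  | Θ, .conj A B => EFmSorted Θ A ∧ EFmSorted Θ B
  | Θ, .disj A B => EFmSorted Θ A ∧ EFmSorted Θ B
  | _, .bot => True
  | Θ, .all s A => EFmSorted (s :: Θ) A
  | Θ, .ex s A => EFmSorted (s :: Θ) A

/-- An F-proposition: a `σ`-normal, well-sorted proposition of `L'` containing
only variables of sort `0`. -/
def FProp (A : EFm S) : Prop := A.TmsNormal ∧ A.vars0F ∧ EFmSorted [] A

/-- An F-term of sort `0`: a `σ`-normal, well-sorted term of sort `0` of `L'`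
containing only variables of sort `0`. -/
def FTerm0 (t : ETm S) : Prop := ENormal t ∧ t.vars0 ∧ HasSort [] t (.tm 0)

/- ## Auxiliary development for strong normalization of σ -/

namespace SigmaSN

variable {S : BSig}

/-- Strong normalization of a term: accessibility for the reversed rewrite relation. -/
def SN (t : ETm S) : Prop := Acc (fun a b : ETm S => Rw b a) t

lemma sn_of_normal {t : ETm S} (h : ENormal t) : SN t :=
  ⟨t, fun u hu => absurd hu (h u)⟩

/-- Size of a term. -/
def size : ETm S → ℕ
  | .evar _ _ => 1
  | .qvar _ => 1
  | .idx _ _ => 1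
  | .fa _ _ a => 1 + ∑ i, size (a i)
  | .sub t s => 1 + size t + size s
  | .eid _ => 1
  | .cons t s => 1 + size t + size s
  | .up _ => 1
  | .comp t s => 1 + size t + size s

lemma size_pos (t : ETm S) : 0 < size t := by
  cases t <;> simp [size]

/-- Immediate subterm relation. -/
inductive ISub : ETm S → ETm S → Prop
  | sub₁ {t s} : ISub t (.sub t s)
  | sub₂ {t s} : ISub s (.sub t s)
  | cons₁ {t s} : ISub t (.cons t s)
  | cons₂ {t s} : ISub s (.cons t s)
  | comp₁ {t s} : ISub t (.comp t s)
  | comp₂ {t s} : ISub s (.comp t s)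
  | fa {f p a} (i) : ISub (a i) (.fa f p a)

lemma size_lt_of_isub {u t : ETm S} (h : ISub u t) : size u < size t := by
  cases h with
  | sub₁ => simp only [size]; omega
  | sub₂ => simp only [size]; omega
  | cons₁ => simp only [size]; omega
  | cons₂ => simp only [size]; omega
  | comp₁ => simp only [size]; omega
  | comp₂ => simp only [size]; omega
  | fa i =>
    rename_i f p a
    simp only [size]
    have h2 : size (a i) ≤ ∑ j, size (a j) :=
      Finset.single_le_sum (f := fun j => size (a j)) (fun _ _ => Nat.zero_le _)
        (Finset.mem_univ i)
    omega

lemma isub_lift {u t u' : ETm S} (h : ISub u t) (hr : Rw u u') :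
    ∃ t', Rw t t' ∧ ISub u' t' := by
  cases h with
  | sub₁ => exact ⟨_, .csub₁ hr, .sub₁⟩
  | sub₂ => exact ⟨_, .csub₂ hr, .sub₂⟩
  | cons₁ => exact ⟨_, .ccons₁ hr, .cons₁⟩
  | cons₂ => exact ⟨_, .ccons₂ hr, .cons₂⟩
  | comp₁ => exact ⟨_, .ccomp₁ hr, .comp₁⟩
  | comp₂ => exact ⟨_, .ccomp₂ hr, .comp₂⟩
  | fa i =>
    rename_i f p a
    refine ⟨.fa f p (Function.update a i u'), .cfa hr, ?_⟩
    have h := ISub.fa (f := f) (p := p) (a := Function.update a i u') i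
    rwa [Function.update_self] at h

lemma sub_lift {u t u' : ETm S} (h : Relation.ReflTransGen ISub u t) (hr : Rw u u') :
    ∃ t', Rw t t' ∧ Relation.ReflTransGen ISub u' t' := by
  induction h with
  | refl => exact ⟨u', hr, .refl⟩
  | tail _ hbc ih =>
    obtain ⟨b', hb, hub⟩ := ih
    obtain ⟨c', hc, hbc'⟩ := isub_lift hbc hb
    exact ⟨c', hc, hub.tail hbc'⟩

/-- Union of (reversed) rewriting and immediate subterm. -/
def RS (S : BSig) : ETm S → ETm S → Prop := fun u t => Rw t u ∨ ISub u t

lemma sn_of_accRS {t : ETm S} (h : Acc (RS S) t) : SN t := by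
  induction h with
  | intro t _ ih => exact ⟨t, fun u hu => ih u (Or.inl hu)⟩

lemma acc_RS_aux {t : ETm S} (h : SN t) :
    ∀ u, Relation.ReflTransGen ISub u t → Acc (RS S) u := by
  induction h with
  | intro t _ iht =>
    have H : ∀ n u, size u ≤ n → Relation.ReflTransGen ISub u t → Acc (RS S) u := by
      intro n
      induction n with
      | zero => intro u hu _; exact absurd hu (by have := size_pos u; omega)
      | succ n ihn =>
        intro u hsz hsub
        constructor
        intro y hy
        cases hy with
        | inl hrw =>
          obtain ⟨t', ht', hsub'⟩ := sub_lift hsub hrw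
          exact iht t' ht' y hsub'
        | inr hisub =>
          exact ihn y (by have := size_lt_of_isub hisub; omega)
            (Relation.ReflTransGen.head hisub hsub)
    intro u hu
    exact H (size u) u le_rfl hu

lemma acc_RS {t : ETm S} (h : SN t) : Acc (RS S) t :=
  acc_RS_aux h t .refl

lemma sn_isub {t u : ETm S} (h : SN t) (hi : ISub u t) : SN u :=
  sn_of_accRS ((acc_RS h).inv (Or.inr hi))

/- ### Normal forms -/

lemma normal_eid {n : ℕ} : ENormal (S := S) (.eid n) := fun u h => by cases h
lemma normal_up {n : ℕ} : ENormal (S := S) (.up n) := fun u h => by cases h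
lemma normal_evar {x : ℕ} {s : Srt} : ENormal (S := S) (.evar x s) := fun u h => by cases h
lemma normal_qvar {i : ℕ} : ENormal (S := S) (.qvar i) := fun u h => by cases h

lemma normal_idx1 {n : ℕ} : ENormal (S := S) (.idx 1 n) := by
  intro u h
  cases h with
  | ridx h1 h2 => omega

lemma upChain_ne_eid {p k n : ℕ} (hk : k ≠ 0) : upChain S p k ≠ .eid n := by
  match k, hk with
  | 1, _ => simp [upChain]
  | (k+2), _ => simp [upChain]

lemma upChain_ne_cons {p k : ℕ} {a b : ETm S} : upChain S p k ≠ .cons a b := by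
  match k with
  | 0 => simp [upChain]
  | 1 => simp [upChain]
  | (k+2) => simp [upChain]

lemma normal_comp_up {p : ℕ} {r : ETm S} (hr : ENormal r)
    (h1 : ∀ t s, r ≠ .cons t s) (h2 : ∀ n, r ≠ .eid n) :
    ENormal (S := S) (.comp (.up p) r) := by
  intro u h
  cases h with
  | rshcons => exact h1 _ _ rfl
  | ridr => exact h2 _ rfl
  | ccomp₁ h' => cases h'
  | ccomp₂ h' => exact hr _ h'

lemma normal_upChain : ∀ (k p : ℕ), ENormal (S := S) (upChain S p k) := by
  intro k
  induction k using Nat.strong_induction_on with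
  | _ k ih =>
    intro p
    match k with
    | 0 => exact normal_eid
    | 1 => exact normal_up
    | (k+2) =>
      show ENormal (.comp (.up p) (upChain S (p+1) (k+1)))
      exact normal_comp_up (ih (k+1) (by omega) (p+1))
        (fun _ _ => upChain_ne_cons) (fun _ => upChain_ne_eid (by omega))

lemma normal_sub_idx1 {m : ℕ} {r : ETm S} (hr : ENormal r)
    (h1 : ∀ t s, r ≠ .cons t s) (h2 : ∀ n, r ≠ .eid n) :
    ENormal (S := S) (.sub (.idx 1 m) r) := by
  intro u h
  cases h with
  | rhead => exact h1 _ _ rfl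
  | rtid => exact h2 _ rfl
  | csub₁ h' => exact normal_idx1 _ h'
  | csub₂ h' => exact hr _ h'

lemma normal_shiftOne {q k j : ℕ} : ENormal (S := S) (shiftOne S q k j) := by
  unfold shiftOne
  split
  · exact normal_idx1
  · next hj =>
    exact normal_sub_idx1 (normal_upChain _ _) (fun _ _ => upChain_ne_cons)
      (fun _ => upChain_ne_eid hj)

/- ### The weight quasi-model -/

/-- The weight of a term: a weakly decreasing measure under rewriting. -/
def wt : ETm S → ℕ
  | .evar _ _ => 1
  | .qvar _ => 1
  | .idx _ _ => 1
  | .fa _ _ a => 1 + ∑ i, (wt (a i) + 1)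
  | .sub t s => wt t * wt s
  | .eid _ => 1
  | .cons t s => max (wt t) (wt s)
  | .up _ => 1
  | .comp t s => wt t * wt s

lemma wt_pos : ∀ t : ETm S, 1 ≤ wt t := by
  intro t
  induction t with
  | evar x s => simp [wt]
  | qvar i => simp [wt]
  | idx i n => simp [wt]
  | fa f p a ih => simp [wt]
  | sub t s iht ihs => simpa [wt] using Nat.mul_le_mul iht ihs
  | eid n => simp [wt]
  | cons t s iht ihs => simp [wt]; omega
  | up n => simp [wt]
  | comp t s iht ihs => simpa [wt] using Nat.mul_le_mul iht ihs

lemma wt_upChain : ∀ (k p : ℕ), wt (upChain S p k) = 1 := by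
  intro k
  induction k using Nat.strong_induction_on with
  | _ k ih =>
    intro p
    match k with
    | 0 => rfl
    | 1 => rfl
    | (k+2) =>
      show wt (.comp (.up p) (upChain S (p+1) (k+1))) = 1
      simp [wt, ih (k+1) (by omega)]

lemma wt_shiftOne {q k j : ℕ} : wt (S := S) (shiftOne S q k j) = 1 := by
  unfold shiftOne
  split <;> simp [wt, wt_upChain]

lemma wt_liftAux {q K : ℕ} {s : ETm S} :
    ∀ (mm j : ℕ), wt (liftAux S q K s mm j) ≤ wt s := by
  intro mm
  induction mm with
  | zero =>
    intro j
    show wt (.comp s (upChain S q K)) ≤ wt s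
    simp [wt, wt_upChain]
  | succ mm ih =>
    intro j
    show wt (.cons (shiftOne S q K j) (liftAux S q K s mm (j+1))) ≤ wt s
    simp only [wt, wt_shiftOne]
    exact max_le (wt_pos s) (ih (j+1))

lemma wt_liftSub {q k : ℕ} {s : ETm S} : wt (liftSub S q k s) ≤ wt s := by
  cases k with
  | zero => exact le_rfl
  | succ k => exact wt_liftAux _ _

lemma wt_step {t u : ETm S} (h : Rw t u) : wt u ≤ wt t := by
  induction h with
  | ridx h1 h2 => simp [wt, wt_upChain]
  | rhead => simp only [wt, one_mul]; exact le_max_left _ _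
  | rtid => simp [wt]
  | rclos => simp [wt, Nat.mul_assoc]
  | ridl => simp [wt]
  | rshcons => simp only [wt, one_mul]; exact le_max_right _ _
  | rassoc => simp [wt, Nat.mul_assoc]
  | rmap =>
    simp only [wt]
    exact max_le (Nat.mul_le_mul (le_max_left _ _) le_rfl)
      (Nat.mul_le_mul (le_max_right _ _) le_rfl)
  | ridr => simp [wt]
  | rvarsh => simp [wt]
  | rscons => simp [wt]
  | rfa =>
    rename_i f p q a s hsort
    simp only [wt]
    have h1 : 1 ≤ wt s := wt_pos s
    calc 1 + ∑ i, (wt (a i) * wt (liftSub S q ((S.far f).get i) s) + 1)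
        ≤ wt s + ∑ i, (wt (a i) * wt s + wt s) := by
          refine add_le_add h1 (Finset.sum_le_sum fun i _ => ?_)
          exact add_le_add (Nat.mul_le_mul le_rfl wt_liftSub) h1
      _ = (1 + ∑ i, (wt (a i) + 1)) * wt s := by
          rw [add_mul, one_mul, Finset.sum_mul]
          congr 1
          refine Finset.sum_congr rfl fun i _ => ?_
          ring
  | cfa h ih =>
    rename_i f p a i t'
    simp only [wt]
    refine add_le_add le_rfl (Finset.sum_le_sum fun j _ => ?_)
    by_cases hj : j = i
    · subst hj; simp only [Function.update_self]; omega
    · simp [Function.update_of_ne hj]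
  | csub₁ h ih => simp only [wt]; exact Nat.mul_le_mul ih le_rfl
  | csub₂ h ih => simp only [wt]; exact Nat.mul_le_mul le_rfl ih
  | ccons₁ h ih => simp only [wt]; exact max_le_max ih le_rfl
  | ccons₂ h ih => simp only [wt]; exact max_le_max le_rfl ih
  | ccomp₁ h ih => simp only [wt]; exact Nat.mul_le_mul ih le_rfl
  | ccomp₂ h ih => simp only [wt]; exact Nat.mul_le_mul le_rfl ih

/- ### Closure lemmas for SN -/

lemma snCons : ∀ {a : ETm S}, SN a → ∀ {b : ETm S}, SN b → SN (.cons a b) := by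
  intro a ha
  induction ha with
  | intro a haf iha =>
    intro b hb
    induction hb with
    | intro b hbf ihb =>
      constructor
      intro y hy
      cases hy with
      | rvarsh => exact sn_of_normal normal_eid
      | rscons => exact sn_isub (Acc.intro _ haf) ISub.sub₂
      | ccons₁ hr => exact iha _ hr (Acc.intro _ hbf)
      | ccons₂ hr => exact ihb _ hr

/-- Pointwise single-coordinate steps on lists. -/
inductive LS : List (ETm S) → List (ETm S) → Prop
  | head {x y : ETm S} {l} : Rw x y → LS (x :: l) (y :: l)
  | tail {x : ETm S} {l l'} : LS l l' → LS (x :: l) (x :: l')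

lemma accLS : ∀ l : List (ETm S), (∀ x ∈ l, SN x) → Acc (fun a b => LS b a) l := by
  intro l
  induction l with
  | nil => intro _; exact ⟨[], fun y hy => by cases hy⟩
  | cons x l ihl =>
    intro h
    have hx : SN x := h x List.mem_cons_self
    have hl : Acc (fun a b => LS b a) l := ihl (fun y hy => h y (List.mem_cons_of_mem _ hy))
    clear h ihl
    revert l
    induction hx with
    | intro x _ ihx =>
      intro l hl
      induction hl with
      | intro l hlf ihl2 =>
        constructor
        intro y hy
        cases hy with
        | head hr => exact ihx _ hr l (Acc.intro _ hlf)
        | tail ht => exact ihl2 _ ht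

lemma ls_ofFn : ∀ {n : ℕ} (b : Fin n → ETm S) (i : Fin n) (t' : ETm S), Rw (b i) t' →
    LS (List.ofFn b) (List.ofFn (Function.update b i t')) := by
  intro n
  induction n with
  | zero => intro b i; exact i.elim0
  | succ n ih =>
    intro b i t' h
    rw [List.ofFn_succ, List.ofFn_succ]
    cases i using Fin.cases with
    | zero =>
      rw [Function.update_self]
      have e : (List.ofFn fun j : Fin n => Function.update b 0 t' j.succ)
          = List.ofFn fun j : Fin n => b j.succ := by
        apply congrArg
        funext j
        exact Function.update_of_ne (Fin.succ_ne_zero j) _ _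
      rw [e]
      exact LS.head h
    | succ i =>
      rw [Function.update_of_ne (Fin.succ_ne_zero i).symm]
      have e : (List.ofFn fun j : Fin n => Function.update b i.succ t' j.succ)
          = List.ofFn (Function.update (fun j : Fin n => b j.succ) i t') := by
        apply congrArg
        funext j
        by_cases hj : j = i
        · subst hj; simp [Function.update_self]
        · rw [Function.update_of_ne (fun hc => hj (Fin.succ_injective _ hc)),
            Function.update_of_ne hj]
      rw [e]
      exact LS.tail (ih _ i t' h)

lemma snFa_aux {f : S.Fn} {p : ℕ} :
    ∀ L, Acc (fun a b => LS b a) L →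
      ∀ b : Fin (S.far f).length → ETm S, List.ofFn b = L → SN (.fa f p b) := by
  intro L hacc
  induction hacc with
  | intro L _ ih =>
    intro b hL
    constructor
    intro y hy
    cases hy with
    | cfa hr => exact ih _ (hL ▸ ls_ofFn b _ _ hr) _ rfl

lemma snFa {f : S.Fn} {p : ℕ} {b : Fin (S.far f).length → ETm S}
    (hb : ∀ i, SN (b i)) : SN (.fa f p b) := by
  refine snFa_aux (List.ofFn b) (accLS _ ?_) b rfl
  intro x hx
  rw [List.mem_ofFn] at hx
  obtain ⟨i, rfl⟩ := hx
  exact hb i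

lemma snLiftAux {q K : ℕ} {s : ETm S} (h : SN (.comp s (upChain S q K))) :
    ∀ (mm j : ℕ), SN (liftAux S q K s mm j) := by
  intro mm
  induction mm with
  | zero => intro j; exact h
  | succ mm ih =>
    intro j
    exact snCons (sn_of_normal normal_shiftOne) (ih (j+1))

/- ### The main closure lemma -/

lemma main : ∀ (N : ℕ) (t : ETm S), Acc (RS S) t → ∀ s : ETm S, Acc (RS S) s →
    wt t * wt s ≤ N → SN (.sub t s) ∧ SN (.comp t s) := by
  intro N
  induction N using Nat.strong_induction_on with
  | _ N ihN =>
  intro t hat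
  induction hat with
  | intro t hatf iht =>
  intro s has
  induction has with
  | intro s hasf ihs =>
  intro hbound
  have hAt : Acc (RS S) t := ⟨t, hatf⟩
  have hAs : Acc (RS S) s := ⟨s, hasf⟩
  have hSNt : SN t := sn_of_accRS hAt
  have hSNs : SN s := sn_of_accRS hAs
  constructor
  · -- SN (.sub t s)
    constructor
    intro y hy
    cases hy with
    | rhead => exact sn_isub hSNs ISub.cons₁
    | rtid => exact hSNt
    | rclos =>
      rename_i t₀ s₀
      have hb1 : wt s₀ * wt s ≤ N := by
        have h0 : wt s₀ ≤ wt t₀ * wt s₀ := Nat.le_mul_of_pos_left _ (wt_pos t₀)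
        calc wt s₀ * wt s ≤ (wt t₀ * wt s₀) * wt s := Nat.mul_le_mul h0 le_rfl
          _ ≤ N := by simpa [wt] using hbound
      have hc : SN (.comp s₀ s) := (iht s₀ (Or.inr ISub.sub₂) s hAs hb1).2
      have hb2 : wt t₀ * wt (ETm.comp s₀ s) ≤ N := by
        simpa [wt, Nat.mul_assoc] using hbound
      exact (iht t₀ (Or.inr ISub.sub₁) _ (acc_RS hc) hb2).1
    | rfa =>
      rename_i f p q a hsort
      apply snFa
      intro i
      have hwa : wt (a i) + 1 ≤ ∑ j, (wt (a j) + 1) :=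
        Finset.single_le_sum (f := fun j => wt (a j) + 1) (fun _ _ => Nat.zero_le _)
          (Finset.mem_univ i)
      have hwt : wt (a i) + 2 ≤ wt (ETm.fa f p a) := by
        simp only [wt]; omega
      have h3 : 3 ≤ wt (ETm.fa f p a) := by
        have := wt_pos (a i); omega
      have hcomp : SN (.comp s (upChain S q ((S.far f).get i))) := by
        have hkey : wt s * wt (upChain S q ((S.far f).get i)) < N := by
          rw [wt_upChain, Nat.mul_one]
          have h4 : 3 * wt s ≤ wt (ETm.fa f p a) * wt s := Nat.mul_le_mul h3 le_rfl
          have h5 : 1 ≤ wt s := wt_pos s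
          have h6 : wt (ETm.fa f p a) * wt s ≤ N := hbound
          omega
        exact (ihN _ hkey s hAs _ (acc_RS (sn_of_normal (normal_upChain _ _))) le_rfl).2
      have hlift : SN (liftSub S q ((S.far f).get i) s) := by
        rcases hk : (S.far f).get i with _ | k
        · exact hSNs
        · rw [hk] at hcomp
          exact snLiftAux hcomp (k+1) 0
      have hb3 : wt (a i) * wt (liftSub S q ((S.far f).get i) s) ≤ N := by
        calc wt (a i) * wt (liftSub S q ((S.far f).get i) s)
            ≤ wt (ETm.fa f p a) * wt s := Nat.mul_le_mul (by omega) wt_liftSub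
          _ ≤ N := hbound
      exact (iht (a i) (Or.inr (ISub.fa i)) _ (acc_RS hlift) hb3).1
    | csub₁ hr =>
      exact (iht _ (Or.inl hr) s hAs
        (le_trans (Nat.mul_le_mul (wt_step hr) le_rfl) hbound)).1
    | csub₂ hr =>
      exact (ihs _ (Or.inl hr)
        (le_trans (Nat.mul_le_mul le_rfl (wt_step hr)) hbound)).1
  · -- SN (.comp t s)
    constructor
    intro y hy
    cases hy with
    | ridl => exact hSNs
    | rshcons => exact sn_isub hSNs ISub.cons₂
    | rassoc =>
      rename_i s₁ s₂
      have hb1 : wt s₂ * wt s ≤ N := by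
        have h0 : wt s₂ ≤ wt s₁ * wt s₂ := Nat.le_mul_of_pos_left _ (wt_pos s₁)
        calc wt s₂ * wt s ≤ (wt s₁ * wt s₂) * wt s := Nat.mul_le_mul h0 le_rfl
          _ ≤ N := by simpa [wt] using hbound
      have hc : SN (.comp s₂ s) := (iht s₂ (Or.inr ISub.comp₂) s hAs hb1).2
      have hb2 : wt s₁ * wt (ETm.comp s₂ s) ≤ N := by
        simpa [wt, Nat.mul_assoc] using hbound
      exact (iht s₁ (Or.inr ISub.comp₁) _ (acc_RS hc) hb2).2
    | rmap =>
      rename_i t₀ s₀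
      have hb1 : wt t₀ * wt s ≤ N :=
        le_trans (Nat.mul_le_mul (by simp only [wt]; exact le_max_left _ _) le_rfl) hbound
      have hb2 : wt s₀ * wt s ≤ N :=
        le_trans (Nat.mul_le_mul (by simp only [wt]; exact le_max_right _ _) le_rfl) hbound
      exact snCons ((iht t₀ (Or.inr ISub.cons₁) s hAs hb1).1)
        ((iht s₀ (Or.inr ISub.cons₂) s hAs hb2).2)
    | ridr => exact hSNt
    | ccomp₁ hr =>
      exact (iht _ (Or.inl hr) s hAs
        (le_trans (Nat.mul_le_mul (wt_step hr) le_rfl) hbound)).2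
    | ccomp₂ hr =>
      exact (ihs _ (Or.inl hr)
        (le_trans (Nat.mul_le_mul le_rfl (wt_step hr)) hbound)).2

lemma sn_all : ∀ t : ETm S, SN t := by
  intro t
  induction t with
  | evar x s => exact sn_of_normal normal_evar
  | qvar i => exact sn_of_normal normal_qvar
  | idx i n =>
    constructor
    intro y hy
    cases hy with
    | ridx h1 h2 =>
      exact sn_of_normal (normal_sub_idx1 (normal_upChain _ _)
        (fun _ _ => upChain_ne_cons) (fun _ => upChain_ne_eid (by omega)))
  | fa f p a ih => exact snFa ih
  | sub t s iht ihs => exact (main _ t (acc_RS iht) s (acc_RS ihs) le_rfl).1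
  | eid n => exact sn_of_normal normal_eid
  | cons t s iht ihs => exact snCons iht ihs
  | up n => exact sn_of_normal normal_up
  | comp t s iht ihs => exact (main _ t (acc_RS iht) s (acc_RS ihs) le_rfl).2

lemma no_inf {x : ETm S} (h : SN x) :
    ∀ g : ℕ → ETm S, g 0 = x → ¬ ∀ n : ℕ, Rw (g n) (g (n + 1)) := by
  induction h with
  | intro x _ ih =>
    intro g h0 hstep
    exact ih (g 1) (h0 ▸ hstep 0) (fun n => g (n + 1)) rfl (fun n => hstep (n + 1))

end SigmaSN

/-- **Strong normalization of `σ`**: there is no infinite sequence of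
`σ`-rewriting steps on the terms of `L'`. -/
theorem sigma_strongly_normalizing (S : BSig) (f : ℕ → ETm S) :
    ¬ ∀ n : ℕ, Rw (f n) (f (n + 1)) :=
  fun h => SigmaSN.no_inf (SigmaSN.sn_all (f 0)) f rfl h
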